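/- Let X be a compact abelian group with Haar probability measure ℙ, let r be a prime, and let g_1, …, g_n be continuous characters of X, each of order r, such that for each k ≥ 2, g_k is not in the subgroup of the dual group generated by g_1, …, g_{k-1}. Then ℙ(⋂_{k=1}^n g_k⁻¹({1})) = r^{-n}; that is, the events {g_k = 1} are independent. -/

import Mathlib

open MeasureTheory Finset

section Aux

variable {X : Type*} [CommGroup X] [TopologicalSpace X] [IsTopologicalGroup X]

/-- Evaluation at a point as a monoid hom from the dual to `Circle`. -/
noncomputable def pontryaginEvalHom (x : X) : PontryaginDual X →* Circle where
  toFun χ := χ x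
  map_one' := rfl
  map_mul' _ _ := rfl

variable [CompactSpace X] [MeasurableSpace X] [BorelSpace X]

omit [CompactSpace X] in
open scoped Classical in
lemma integral_char (μ : Measure X) [μ.IsHaarMeasure] [IsProbabilityMeasure μ]
    (χ : PontryaginDual X) : ∫ x, (χ x : ℂ) ∂μ = if χ = 1 then 1 else 0 := by
  split_ifs with h
  · subst h
    rw [show (fun x => (((1 : PontryaginDual X)) x : ℂ)) = fun _ => (1:ℂ) from rfl]
    simp
  · obtain ⟨x₀, hx₀⟩ : ∃ x₀, χ x₀ ≠ 1 := by
      by_contra hc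
      push_neg at hc
      exact h (ContinuousMonoidHom.ext fun x => hc x)
    have hint : ∫ x, (χ (x₀ * x) : ℂ) ∂μ = ∫ x, (χ x : ℂ) ∂μ :=
      integral_mul_left_eq_self (fun x => (χ x : ℂ)) x₀
    simp_rw [map_mul, Circle.coe_mul, integral_const_mul] at hint
    have h1 : ((χ x₀ : ℂ) - 1) * ∫ x, (χ x : ℂ) ∂μ = 0 := by
      rw [sub_mul, one_mul, hint, sub_self]
    rcases mul_eq_zero.mp h1 with h2 | h2
    · exact absurd (Circle.coe_eq_one.mp (by linear_combination h2)) hx₀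
    · exact h2

omit [IsTopologicalGroup X] in
lemma char_integrable (μ : Measure X) [IsFiniteMeasure μ] (χ : PontryaginDual X) :
    Integrable (fun x => (χ x : ℂ)) μ :=
  (continuous_subtype_val.comp χ.continuous).integrable_of_hasCompactSupport
    (HasCompactSupport.of_compactSpace _)

end Aux

open scoped Classical in
lemma sum_circle_pow (r : ℕ) (z : Circle) (hz : z ^ r = 1) :
    ∑ j ∈ Finset.range r, (z : ℂ) ^ j = if z = 1 then (r : ℂ) else 0 := by
  split_ifs with h
  · subst h; simp
  · have hz1 : (z : ℂ) ≠ 1 := fun hc => h (Circle.coe_eq_one.mp hc)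
    rw [geom_sum_eq hz1]
    have : (z : ℂ) ^ r = 1 := by
      calc (z : ℂ) ^ r = ((z ^ r : Circle) : ℂ) := (map_pow Circle.coeHom z r).symm
        _ = 1 := by rw [hz]; rfl
    rw [this, sub_self, zero_div]

lemma exponents_eq_zero {G : Type*} [CommGroup G] (r n : ℕ) (hr : r.Prime)
    (g : Fin n → G) (hord : ∀ k, orderOf (g k) = r)
    (hind : ∀ k : Fin n, g k ∉ Subgroup.closure (g '' {j | j < k}))
    (p : Fin n → ℕ) (hp : ∀ k, p k < r) (h1 : ∏ k, g k ^ p k = 1) : ∀ k, p k = 0 := by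
  by_contra hc
  push_neg at hc
  obtain ⟨k0, hk0⟩ := hc
  classical
  set s : Finset (Fin n) := Finset.univ.filter (fun k => p k ≠ 0) with hs
  have hsne : s.Nonempty := ⟨k0, by simp [hs, hk0]⟩
  set m := s.max' hsne with hm_def
  have hm : p m ≠ 0 := by
    have := s.max'_mem hsne
    simp only [hs, Finset.mem_filter] at this
    exact this.2
  have hgt : ∀ k, m < k → p k = 0 := by
    intro k hk
    by_contra h
    exact absurd (s.le_max' k (by simp [hs, h])) (not_le.mpr hk)
  have hsplit : g m ^ p m * ∏ k ∈ Finset.univ.erase m, g k ^ p k = 1 :=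
    (Finset.mul_prod_erase Finset.univ (fun k => g k ^ p k) (Finset.mem_univ m)).trans h1
  have hmem : (∏ k ∈ Finset.univ.erase m, g k ^ p k) ∈
      Subgroup.closure (g '' {j | j < m}) := by
    refine Subgroup.prod_mem _ fun k hk => ?_
    rcases lt_trichotomy k m with hkm | hkm | hkm
    · exact Subgroup.pow_mem _
        (Subgroup.subset_closure (show g k ∈ g '' {j | j < m} from ⟨k, hkm, rfl⟩)) _
    · exact absurd hkm (Finset.ne_of_mem_erase hk)
    · rw [hgt k hkm, pow_zero]; exact Subgroup.one_mem _
  have hpow : g m ^ p m ∈ Subgroup.closure (g '' {j | j < m}) := by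
    rw [eq_inv_of_mul_eq_one_left hsplit]
    exact Subgroup.inv_mem _ hmem
  have hcop : Nat.Coprime r (p m) :=
    hr.coprime_iff_not_dvd.mpr fun hd =>
      absurd (Nat.le_of_dvd (Nat.pos_of_ne_zero hm) hd) (not_le.mpr (hp m))
  have hab : ((p m : ℤ)) * Nat.gcdA (p m) r + (r : ℤ) * Nat.gcdB (p m) r = 1 := by
    have hb := Nat.gcd_eq_gcd_ab (p m) r
    rw [Nat.Coprime.gcd_eq_one hcop.symm] at hb
    exact_mod_cast hb.symm
  have hr1 : g m ^ (r : ℤ) = 1 := by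
    rw [zpow_natCast, ← hord m, pow_orderOf_eq_one]
  have hgm : g m = (g m ^ (p m : ℤ)) ^ Nat.gcdA (p m) r := by
    calc g m = g m ^ ((p m : ℤ) * Nat.gcdA (p m) r + (r : ℤ) * Nat.gcdB (p m) r) := by
          rw [hab, zpow_one]
      _ = g m ^ ((p m : ℤ) * Nat.gcdA (p m) r) * g m ^ ((r : ℤ) * Nat.gcdB (p m) r) :=
          zpow_add _ _ _
      _ = (g m ^ (p m : ℤ)) ^ Nat.gcdA (p m) r * (g m ^ (r : ℤ)) ^ Nat.gcdB (p m) r := by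
          rw [zpow_mul, zpow_mul]
      _ = (g m ^ (p m : ℤ)) ^ Nat.gcdA (p m) r := by rw [hr1, one_zpow, mul_one]
  refine hind m ?_
  rw [hgm]
  exact Subgroup.zpow_mem _ (by rw [zpow_natCast]; exact hpow) _

theorem haar_measure_inter_kernels_of_independent_characters
    {X : Type*} [CommGroup X] [TopologicalSpace X] [IsTopologicalGroup X] [CompactSpace X]
    [MeasurableSpace X] [BorelSpace X]
    (μ : Measure X) [μ.IsHaarMeasure] [IsProbabilityMeasure μ]
    (r : ℕ) (hr : r.Prime) (n : ℕ) (g : Fin n → PontryaginDual X)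
    (hord : ∀ k, orderOf (g k) = r)
    (hind : ∀ k : Fin n, g k ∉ Subgroup.closure (g '' {j | j < k})) :
    μ (⋂ k, ⇑(g k) ⁻¹' {1}) = ((r : ENNReal) ^ n)⁻¹ := by
  classical
  have hrpos : 0 < r := hr.pos
  set S := ⋂ k, ⇑(g k) ⁻¹' {1} with hSdef
  have hmeas : MeasurableSet S :=
    MeasurableSet.iInter fun k => (isClosed_singleton.preimage (g k).continuous).measurableSet
  have hchar : ∀ k : Fin n, g k ^ r = 1 := fun k => by
    rw [← hord k]; exact pow_orderOf_eq_one _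
  have hzr : ∀ (k : Fin n) (x : X), (g k x) ^ r = 1 := fun k x => by
    show pontryaginEvalHom x (g k) ^ r = 1
    rw [← map_pow, hchar k, map_one]
  -- pointwise identity
  have hind_fun : ∀ x, S.indicator (fun _ => (1:ℂ)) x
      = ((r:ℂ))⁻¹ ^ n * ∑ p ∈ Fintype.piFinset (fun _ : Fin n => Finset.range r),
          ((∏ k, g k ^ p k : PontryaginDual X) x : ℂ) := by
    intro x
    have step1 : ∏ k : Fin n, ((r:ℂ)⁻¹ * ∑ j ∈ Finset.range r, ((g k x : ℂ)) ^ j)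
        = ((r:ℂ))⁻¹ ^ n * ∑ p ∈ Fintype.piFinset (fun _ : Fin n => Finset.range r),
            ((∏ k, g k ^ p k : PontryaginDual X) x : ℂ) := by
      rw [Finset.prod_mul_distrib, Finset.prod_const, Finset.card_univ, Fintype.card_fin,
        Finset.prod_univ_sum]
      congr 1
      refine Finset.sum_congr rfl fun p _ => ?_
      have : ((∏ k, g k ^ p k : PontryaginDual X) x : ℂ)
          = Circle.coeHom ((pontryaginEvalHom x) (∏ k, g k ^ p k)) := rfl
      rw [this, map_prod, map_prod]
      refine Finset.prod_congr rfl fun k _ => ?_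
      rw [map_pow, map_pow]
      rfl
    rw [← step1]
    by_cases hx : x ∈ S
    · have hone : ∀ k : Fin n, g k x = 1 := by
        intro k
        have := Set.mem_iInter.mp hx k
        simpa using this
      rw [Set.indicator_of_mem hx]
      have : ∀ k : Fin n, (r:ℂ)⁻¹ * ∑ j ∈ Finset.range r, ((g k x : ℂ)) ^ j = 1 := by
        intro k
        rw [sum_circle_pow r _ (hzr k x), if_pos (hone k),
          inv_mul_cancel₀ (by exact_mod_cast hrpos.ne')]
      rw [Finset.prod_congr rfl fun k _ => this k, Finset.prod_const_one]
    · obtain ⟨k, hk⟩ : ∃ k : Fin n, g k x ≠ 1 := by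
        by_contra hc
        push_neg at hc
        exact hx (Set.mem_iInter.mpr fun k => by simpa using hc k)
      rw [Set.indicator_of_notMem hx]
      refine (Finset.prod_eq_zero (Finset.mem_univ k) ?_).symm
      rw [sum_circle_pow r _ (hzr k x), if_neg hk, mul_zero]
  -- integrate both sides
  have hint1 : ∫ x, S.indicator (fun _ => (1:ℂ)) x ∂μ = ((μ S).toReal : ℂ) := by
    rw [integral_indicator_const (1:ℂ) hmeas]
    simp [Complex.real_smul, measureReal_def]
  have hint2 : ∫ x, S.indicator (fun _ => (1:ℂ)) x ∂μ = ((r:ℂ))⁻¹ ^ n := by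
    simp_rw [hind_fun]
    rw [integral_const_mul,
      integral_finset_sum _ (fun p _ => char_integrable μ (∏ k, g k ^ p k))]
    have hsum : ∑ p ∈ Fintype.piFinset (fun _ : Fin n => Finset.range r),
        ∫ x, ((∏ k, g k ^ p k : PontryaginDual X) x : ℂ) ∂μ = 1 := by
      have : ∀ p ∈ Fintype.piFinset (fun _ : Fin n => Finset.range r),
          ∫ x, ((∏ k, g k ^ p k : PontryaginDual X) x : ℂ) ∂μ
          = if p = (fun _ => 0) then 1 else 0 := by
        intro p hp
        rw [integral_char]
        by_cases h0 : p = fun _ => 0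
        · rw [if_pos h0, if_pos]
          subst h0
          simp
        · rw [if_neg h0, if_neg]
          intro h1
          refine h0 (funext ?_)
          exact exponents_eq_zero r n hr g hord hind p
            (fun k => Finset.mem_range.mp (Fintype.mem_piFinset.mp hp k)) h1
      rw [Finset.sum_congr rfl this, Finset.sum_ite_eq' _ (fun _ => 0) (fun _ => (1:ℂ)),
        if_pos]
      exact Fintype.mem_piFinset.mpr fun k => Finset.mem_range.mpr hrpos
    rw [hsum, mul_one]
  have hreal : (μ S).toReal = ((r:ℝ) ^ n)⁻¹ := by
    have := hint1.symm.trans hint2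
    rw [inv_pow] at this
    have h2 : (((μ S).toReal : ℂ)) = ((((r:ℝ) ^ n)⁻¹ : ℝ) : ℂ) := by
      rw [this]; push_cast; ring
    exact_mod_cast h2
  have hne : μ S ≠ ⊤ := measure_ne_top μ S
  have hne' : ((r : ENNReal) ^ n)⁻¹ ≠ ⊤ := by
    simp [pow_eq_zero_iff, hrpos.ne']
  refine (ENNReal.toReal_eq_toReal_iff' hne hne').mp ?_
  rw [hreal, ENNReal.toReal_inv, ENNReal.toReal_pow]
  norm_num
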